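/- arXiv:2404.17563 — 5 statements merged into one kernel-verified Lean document; each statement's English description precedes it below -/
import Mathlib

section
/- Let S > 0, η > 0, c > 0, and suppose a(t), b(t) satisfy a'(t) = −ηc·b(t)(a(t)b(t) − S), b'(t) = −ηc·a(t)(a(t)b(t) − S) with a(0) = b(0) and 0 < a(0)b(0) < S. Then a(t) = b(t) for all t ≥ 0, and R(t) := a(t)b(t) satisfies R'(t) = −2ηc·R(t)(R(t) − S), hence R(t) = S / (1 + (S/R(0) − 1)exp(−2ηcSt)). -/
open Set Real

theorem stmt_1 (S η c : ℝ) (hS : 0 < S) (hη : 0 < η) (hc : 0 < c)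
    (a b : ℝ → ℝ)
    (ha : ∀ t ≥ (0:ℝ), HasDerivAt a (-(η * c * b t * (a t * b t - S))) t)
    (hb : ∀ t ≥ (0:ℝ), HasDerivAt b (-(η * c * a t * (a t * b t - S))) t)
    (hab0 : a 0 = b 0) (h0 : 0 < a 0 * b 0) (h0S : a 0 * b 0 < S) :
    (∀ t ≥ (0:ℝ), a t = b t) ∧
    (∀ t ≥ (0:ℝ), HasDerivAt (fun s => a s * b s)
      (-(2 * η * c * (a t * b t) * (a t * b t - S))) t) ∧
    (∀ t ≥ (0:ℝ), a t * b t =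
      S / (1 + (S / (a 0 * b 0) - 1) * Real.exp (-2 * η * c * S * t))) := by
  have hca : ContinuousOn a (Ici (0:ℝ)) := fun t ht => (ha t ht).continuousAt.continuousWithinAt
  have hcb : ContinuousOn b (Ici (0:ℝ)) := fun t ht => (hb t ht).continuousAt.continuousWithinAt
  -- Part 1
  have part1 : ∀ t ≥ (0:ℝ), a t = b t := by
    intro T hT
    set cl : ℝ → ℝ := fun t => min T (max t 0) with hcl
    have hclmem : ∀ t, cl t ∈ Icc (0:ℝ) T := fun t =>
      ⟨le_min hT (le_max_right _ _), min_le_left _ _⟩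
    have hclcont : Continuous cl := continuous_const.min (continuous_id.max continuous_const)
    have hcleq : ∀ t ∈ Icc (0:ℝ) T, cl t = t := by
      intro t ht
      simp only [hcl]
      rw [max_eq_left ht.1, min_eq_right ht.2]
    set ψ : ℝ → ℝ := fun t => η * c * (a t * b t - S) with hψ
    have hψc : ContinuousOn ψ (Icc 0 T) :=
      continuousOn_const.mul
        (((hca.mono (Icc_subset_Ici_self)).mul (hcb.mono Icc_subset_Ici_self)).sub
          continuousOn_const)
    obtain ⟨K, hK⟩ := isCompact_Icc.exists_bound_of_continuousOn hψc
    set φ : ℝ → ℝ := fun t => ψ (cl t) with hφ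
    have hφK : ∀ t, |φ t| ≤ K := fun t => hK _ (hclmem t)
    set v : ℝ → ℝ → ℝ := fun t x => φ t * x with hv_def
    have hv : ∀ t, LipschitzWith K.toNNReal (v t) := by
      intro t
      apply LipschitzWith.of_dist_le_mul
      intro x y
      simp only [hv_def, Real.dist_eq, ← mul_sub, abs_mul]
      calc |φ t| * |x - y| ≤ K * |x - y| :=
            mul_le_mul_of_nonneg_right (hφK t) (abs_nonneg _)
        _ ≤ (K.toNNReal : ℝ) * |x - y| := by
            apply mul_le_mul_of_nonneg_right _ (abs_nonneg _)
            rw [Real.coe_toNNReal']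
            exact le_max_left _ _
    have heq : EqOn (fun t => a t - b t) (fun _ => (0:ℝ)) (Icc 0 T) := by
      apply ODE_solution_unique hv
      · exact ((hca.mono Icc_subset_Ici_self).sub (hcb.mono Icc_subset_Ici_self))
      · intro t ht
        have hd : HasDerivWithinAt (fun t => a t - b t) _ (Ici t) t := ((ha t ht.1).sub (hb t ht.1)).hasDerivWithinAt (s := Ici t)
        refine hd.congr_deriv (Eq.symm ?_)
        have hclt := hcleq t (Ico_subset_Icc_self ht)
        show φ t * (a t - b t) = _
        simp only [hφ, hψ, hclt]
        ring
      · exact continuousOn_const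
      · intro t ht
        show HasDerivWithinAt _ (φ t * 0) _ _
        rw [mul_zero]
        exact (hasDerivAt_const t (0:ℝ)).hasDerivWithinAt
      · simpa using sub_eq_zero.mpr hab0
    have := heq (right_mem_Icc.mpr hT)
    simpa [sub_eq_zero] using this
  refine ⟨part1, ?_, ?_⟩
  -- Part 2
  · intro t ht
    have h : HasDerivAt (fun s => a s * b s) _ t := (ha t ht).mul (hb t ht)
    convert h using 1
    have hab := part1 t ht
    rw [hab]; ring
  -- Part 3
  · have part2 : ∀ t ≥ (0:ℝ), HasDerivAt (fun s => a s * b s)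
        (-(2 * η * c * (a t * b t) * (a t * b t - S))) t := by
      intro t ht
      have h : HasDerivAt (fun s => a s * b s) _ t := (ha t ht).mul (hb t ht)
      convert h using 1
      have hab := part1 t ht
      rw [hab]; ring
    intro T hT
    set R0 : ℝ := a 0 * b 0 with hR0
    have hR0ne : R0 ≠ 0 := ne_of_gt h0
    set C : ℝ := S / R0 - 1 with hC
    have hCpos : 0 < C := by
      have h1 : 1 < S / R0 := (one_lt_div h0).mpr h0S
      rw [hC]; linarith
    set den : ℝ → ℝ := fun t => 1 + C * Real.exp (-2 * η * c * S * t) with hden_def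
    have hdenpos : ∀ t, 0 < den t := by
      intro t
      have := Real.exp_pos (-2 * η * c * S * t)
      have : 0 < C * Real.exp (-2 * η * c * S * t) := mul_pos hCpos this
      simp only [hden_def]; linarith
    set g : ℝ → ℝ := fun t => S / den t with hg_def
    have hg0 : g 0 = R0 := by
      simp only [hg_def, hden_def]
      rw [mul_zero, Real.exp_zero, mul_one, hC]
      field_simp
      rw [show R0 + (S - R0) = S by ring]; exact div_self (ne_of_gt hS)
    have hgS : ∀ t, 0 < g t ∧ g t ≤ S := by
      intro t
      constructor
      · exact div_pos hS (hdenpos t)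
      · rw [div_le_iff₀ (hdenpos t)]
        have h1 : (1:ℝ) ≤ den t := by
          have : 0 < C * Real.exp (-2 * η * c * S * t) :=
            mul_pos hCpos (Real.exp_pos _)
          simp only [hden_def]; linarith
        nlinarith
    have hgd : ∀ t, HasDerivAt g (-(2 * η * c * (g t) * (g t - S))) t := by
      intro t
      have he : HasDerivAt (fun t => Real.exp (-2 * η * c * S * t))
          (Real.exp (-2 * η * c * S * t) * (-2 * η * c * S)) t := by
        have h1 : HasDerivAt (fun t : ℝ => -2 * η * c * S * t) (-2 * η * c * S) t := by
          simpa using (hasDerivAt_id t).const_mul (-2 * η * c * S)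
        exact (Real.hasDerivAt_exp _).comp t h1
      have hden' : HasDerivAt den (C * (Real.exp (-2 * η * c * S * t) * (-2 * η * c * S))) t := by
        simpa [hden_def] using ((he.const_mul C).const_add 1)
      have hd : HasDerivAt (fun t => S / den t) _ t := (hasDerivAt_const t S).div hden' (ne_of_gt (hdenpos t))
      convert hd using 1
      have hdne : den t ≠ 0 := ne_of_gt (hdenpos t)
      simp only [hg_def, zero_mul]
      field_simp
      rw [show den t = 1 + C * Real.exp (-(η * c * S * t * 2)) by simp only [hden_def]; ring_nf]
      ring
    -- uniqueness
    set Rf : ℝ → ℝ := fun t => a t * b t with hRf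
    have hRc : ContinuousOn Rf (Icc 0 T) :=
      (hca.mono Icc_subset_Ici_self).mul (hcb.mono Icc_subset_Ici_self)
    obtain ⟨M1, hM1⟩ := isCompact_Icc.exists_bound_of_continuousOn hRc
    set M : ℝ := max M1 S with hM
    have hMS : S ≤ M := le_max_right _ _
    have hMpos : 0 < M := lt_of_lt_of_le hS hMS
    set v2 : ℝ → ℝ → ℝ := fun _ x => -(2 * η * c * x * (x - S)) with hv2
    set K2 : NNReal := (2 * η * c * (2 * M + S)).toNNReal with hK2
    have hv2lip : ∀ t, LipschitzOnWith K2 (v2 t) (Icc (-M) M) := by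
      intro t
      apply LipschitzOnWith.of_dist_le_mul
      intro x hx y hy
      have hfac : v2 t x - v2 t y = (-(2 * η * c * (x + y - S))) * (x - y) := by
        simp only [hv2]; ring
      rw [Real.dist_eq, Real.dist_eq, hfac, abs_mul]
      have hb1 : |(-(2 * η * c * (x + y - S)))| ≤ 2 * η * c * (2 * M + S) := by
        rw [abs_neg]
        have : |2 * η * c * (x + y - S)| = 2 * η * c * |x + y - S| := by
          rw [abs_mul, abs_of_pos (by positivity : (0:ℝ) < 2 * η * c)]
        rw [this]
        apply mul_le_mul_of_nonneg_left _ (by positivity)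
        rw [abs_le]
        obtain ⟨hx1, hx2⟩ := hx
        obtain ⟨hy1, hy2⟩ := hy
        constructor <;> linarith
      calc |(-(2 * η * c * (x + y - S)))| * |x - y|
          ≤ 2 * η * c * (2 * M + S) * |x - y| :=
            mul_le_mul_of_nonneg_right hb1 (abs_nonneg _)
        _ ≤ (K2 : ℝ) * |x - y| := by
            apply mul_le_mul_of_nonneg_right _ (abs_nonneg _)
            rw [hK2, Real.coe_toNNReal']
            exact le_max_left _ _
    have heq : EqOn Rf g (Icc 0 T) := by
      apply ODE_solution_unique_of_mem_Icc_right (fun t _ => hv2lip t) hRc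
      · intro t ht
        exact ((part2 t ht.1).hasDerivWithinAt (s := Ici t))
      · intro t ht
        have := hM1 t (Ico_subset_Icc_self ht)
        rw [Real.norm_eq_abs, abs_le] at this
        constructor <;> [linarith [le_max_left M1 S]; linarith [le_max_left M1 S]]
      · exact fun t _ => (hgd t).continuousAt.continuousWithinAt
      · intro t ht
        exact (hgd t).hasDerivWithinAt
      · intro t ht
        obtain ⟨h1, h2⟩ := hgS t
        constructor <;> linarith
      · exact hg0.symm
    exact heq (right_mem_Icc.mpr hT)
end

section
/- Fix S > 0, 0 < r < S, η > 0, T > 0, and define F(z) = S² / (2(1 + (S/r − 1)⁻¹·e^{2ηSTz})²). Then for all z ∈ ℝ, |F''(z)| < 8S⁴η²T². -/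
lemma stmt_3_aux (K a c : ℝ) (hK : 0 < K) (ha : 0 < a) (hc : 0 < c) (z : ℝ) :
    |iteratedDeriv 2 (fun z => K / (2 * (1 + c * Real.exp (a * z)) ^ 2)) z| <
      2 * K * a ^ 2 := by
  have hu : ∀ x : ℝ, HasDerivAt (fun y => c * Real.exp (a * y))
      (a * (c * Real.exp (a * x))) x := by
    intro x
    have h1 : HasDerivAt (fun y : ℝ => a * y) a x := by
      simpa using (hasDerivAt_id x).const_mul a
    have h2 := h1.exp.const_mul c
    refine h2.congr_deriv ?_
    ring
  have huPos : ∀ x : ℝ, 0 < c * Real.exp (a * x) := fun x => by positivity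
  have hdenPos : ∀ x : ℝ, 0 < 1 + c * Real.exp (a * x) := fun x => by nlinarith [huPos x]
  set F1 : ℝ → ℝ := fun x => -(K * a * (c * Real.exp (a * x))) /
      (1 + c * Real.exp (a * x)) ^ 3 with hF1
  have hderivF : deriv (fun z => K / (2 * (1 + c * Real.exp (a * z)) ^ 2)) = F1 := by
    funext x
    have hden : HasDerivAt (fun y => 2 * (1 + c * Real.exp (a * y)) ^ 2)
        (2 * (2 * (1 + c * Real.exp (a * x)) * (a * (c * Real.exp (a * x))))) x := by
      have h2 : HasDerivAt (fun y => 1 + c * Real.exp (a * y))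
          (a * (c * Real.exp (a * x))) x := (hu x).const_add 1
      have h3 := (h2.pow 2).const_mul 2
      refine h3.congr_deriv ?_
      ring
    have hne : 2 * (1 + c * Real.exp (a * x)) ^ 2 ≠ 0 := by positivity
    have hd := (hasDerivAt_const x K).div hden hne
    have hd' : HasDerivAt (fun z => K / (2 * (1 + c * Real.exp (a * z)) ^ 2)) (F1 x) x := by
      refine hd.congr_deriv ?_
      rw [div_eq_div_iff (by positivity) (by positivity)]
      ring
    exact hd'.deriv
  have hd2 : HasDerivAt F1
      (K * a ^ 2 * (c * Real.exp (a * z)) * (2 * (c * Real.exp (a * z)) - 1) /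
        (1 + c * Real.exp (a * z)) ^ 4) z := by
    have hnum : HasDerivAt (fun y => -(K * a * (c * Real.exp (a * y))))
        (-(K * a * (a * (c * Real.exp (a * z))))) z := ((hu z).const_mul (K * a)).neg
    have hden : HasDerivAt (fun y => (1 + c * Real.exp (a * y)) ^ 3)
        (3 * (1 + c * Real.exp (a * z)) ^ 2 * (a * (c * Real.exp (a * z)))) z := by
      have h2 : HasDerivAt (fun y => 1 + c * Real.exp (a * y))
          (a * (c * Real.exp (a * z))) z := (hu z).const_add 1
      have h3 := h2.pow 3
      refine h3.congr_deriv ?_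
      norm_num
    have hne : (1 + c * Real.exp (a * z)) ^ 3 ≠ 0 := by positivity
    have hd := hnum.div hden hne
    refine hd.congr_deriv ?_
    rw [div_eq_div_iff (by positivity) (by positivity)]
    ring
  have hkey : iteratedDeriv 2 (fun z => K / (2 * (1 + c * Real.exp (a * z)) ^ 2)) z =
      K * a ^ 2 * (c * Real.exp (a * z)) * (2 * (c * Real.exp (a * z)) - 1) /
        (1 + c * Real.exp (a * z)) ^ 4 := by
    rw [iteratedDeriv_succ, iteratedDeriv_one, hderivF]
    exact hd2.deriv
  rw [hkey]
  set v : ℝ := c * Real.exp (a * z) with hv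
  have hvPos : 0 < v := huPos z
  have hP : 0 < 1 + v := hdenPos z
  rw [abs_div, abs_of_pos (by positivity : (0:ℝ) < (1 + v) ^ 4),
    div_lt_iff₀ (by positivity)]
  have habs : |K * a ^ 2 * v * (2 * v - 1)| = K * a ^ 2 * v * |2 * v - 1| := by
    rw [abs_mul, abs_of_pos (by positivity : (0:ℝ) < K * a ^ 2 * v)]
  rw [habs]
  have hb : |2 * v - 1| ≤ 2 * v + 1 := by
    rw [abs_le]; constructor <;> linarith
  have h5 : v * (2 * v + 1) < 2 * (1 + v) ^ 4 := by nlinarith [sq_nonneg v, sq_nonneg (1 + v)]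
  have h6 := mul_lt_mul_of_pos_left h5 (by positivity : (0:ℝ) < K * a ^ 2)
  calc K * a ^ 2 * v * |2 * v - 1| ≤ K * a ^ 2 * v * (2 * v + 1) :=
        mul_le_mul_of_nonneg_left hb (by positivity)
    _ = K * a ^ 2 * (v * (2 * v + 1)) := by ring
    _ < K * a ^ 2 * (2 * (1 + v) ^ 4) := h6
    _ = 2 * K * a ^ 2 * (1 + v) ^ 4 := by ring

theorem stmt_3 (S r η T : ℝ) (hS : 0 < S) (hr : 0 < r) (hrS : r < S)
    (hη : 0 < η) (hT : 0 < T)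
    (F : ℝ → ℝ)
    (hF : F = fun z => S ^ 2 / (2 * (1 + (S / r - 1)⁻¹ * Real.exp (2 * η * S * T * z)) ^ 2)) :
    ∀ z : ℝ, |iteratedDeriv 2 F z| < 8 * S ^ 4 * η ^ 2 * T ^ 2 := by
  intro z
  have hcden : 0 < S / r - 1 := by
    have : 1 < S / r := (one_lt_div hr).mpr hrS
    linarith
  have h := stmt_3_aux (S ^ 2) (2 * η * S * T) ((S / r - 1)⁻¹)
    (by positivity) (by positivity) (inv_pos.mpr hcden) z
  rw [hF]
  calc |iteratedDeriv 2
        (fun z => S ^ 2 / (2 * (1 + (S / r - 1)⁻¹ * Real.exp (2 * η * S * T * z)) ^ 2)) z|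
      < 2 * S ^ 2 * (2 * η * S * T) ^ 2 := h
    _ = 8 * S ^ 4 * η ^ 2 * T ^ 2 := by ring
end

section
/- Fix S > 0, 0 < r < S, η > 0, T > 0, and define F(z) = S² / (2(1 + (S/r − 1)⁻¹·e^{2ηSTz})²). Then for all z ≥ 0: (S−r)²/2 − (8ηS³T/27)·z ≤ F(z) ≤ (S−r)²/2. -/
theorem stmt_4 (S r η T : ℝ) (hS : 0 < S) (hr : 0 < r) (hrS : r < S)
    (hη : 0 < η) (hT : 0 < T)
    (F : ℝ → ℝ)
    (hF : F = fun z => S ^ 2 / (2 * (1 + (S / r - 1)⁻¹ * Real.exp (2 * η * S * T * z)) ^ 2)) :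
    ∀ z ≥ (0:ℝ),
      (S - r) ^ 2 / 2 - (8 * η * S ^ 3 * T / 27) * z ≤ F z ∧ F z ≤ (S - r) ^ 2 / 2 := by
  have hSr : 0 < S - r := by linarith
  set c := 2 * η * S * T with hcdef
  have hc : 0 < c := by positivity
  set a := (S / r - 1)⁻¹ with hadef
  have ha : a = r / (S - r) := by
    rw [hadef]
    rw [show S / r - 1 = (S - r) / r by field_simp, inv_div]
  have ha0 : 0 < a := by rw [ha]; positivity
  have h1a : 1 + a = S / (S - r) := by rw [ha]; field_simp; ring
  have hF0 : S ^ 2 / (2 * (1 + a) ^ 2) = (S - r) ^ 2 / 2 := by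
    rw [h1a]; field_simp
  set K := 8 * η * S ^ 3 * T / 27 with hK
  have hFeq : ∀ z, F z = S ^ 2 / 2 * ((1 + a * Real.exp (c * z)) ^ 2)⁻¹ := by
    intro z; simp only [hF]; rw [div_mul_eq_div_div, div_eq_mul_inv]
  have key : Monotone (fun z => F z + K * z) := by
    have hderiv : ∀ z, HasDerivAt (fun z => F z + K * z)
        ((S ^ 2 / 2) * (-(2 * (1 + a * Real.exp (c * z)) ^ 1 * (a * (Real.exp (c * z) * c))) /
          ((1 + a * Real.exp (c * z)) ^ 2) ^ 2) + K * 1) z := by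
      intro z
      have h1 : HasDerivAt (fun z : ℝ => c * z) c z := by
        simpa using (hasDerivAt_id z).const_mul c
      have h2 : HasDerivAt (fun z => Real.exp (c * z)) (Real.exp (c * z) * c) z :=
        (Real.hasDerivAt_exp (c * z)).comp z h1
      have h3 : HasDerivAt (fun z => 1 + a * Real.exp (c * z))
          (a * (Real.exp (c * z) * c)) z := (h2.const_mul a).const_add 1
      have h4 : HasDerivAt (fun z => (1 + a * Real.exp (c * z)) ^ 2)
          (2 * (1 + a * Real.exp (c * z)) ^ 1 * (a * (Real.exp (c * z) * c))) z := h3.pow 2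
      have hpos : (0:ℝ) < 1 + a * Real.exp (c * z) := by positivity
      have h5 := h4.inv (by positivity)
      have h6 := (h5.const_mul (S ^ 2 / 2)).add ((hasDerivAt_id z).const_mul K)
      have hfun : (fun z => F z + K * z) =
          (fun z => S ^ 2 / 2 * ((1 + a * Real.exp (c * z)) ^ 2)⁻¹ + K * z) := by
        funext w; rw [hFeq w]
      rw [hfun]
      exact h6
    apply monotone_of_deriv_nonneg
    · exact fun z => (hderiv z).differentiableAt
    · intro z
      rw [(hderiv z).deriv]
      set t := a * Real.exp (c * z) with htdef
      have ht : 0 < t := by positivity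
      have heq : (S ^ 2 / 2) * (-(2 * (1 + t) ^ 1 * (a * (Real.exp (c * z) * c))) /
          ((1 + t) ^ 2) ^ 2) = -(S ^ 2 * c * t / (1 + t) ^ 3) := by
        have h1t : (0:ℝ) < 1 + t := by positivity
        rw [htdef]
        field_simp
      rw [heq]
      have hdiv : S ^ 2 * c * t / (1 + t) ^ 3 ≤ K := by
        rw [div_le_iff₀ (by positivity)]
        have hK27 : K = 4 / 27 * (S ^ 2 * c) := by rw [hK, hcdef]; ring
        rw [hK27]
        have hfac : 0 ≤ (2 * t - 1) ^ 2 * (t + 4) := by positivity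
        nlinarith [mul_pos (mul_pos (pow_pos hS 2) hc) ht, sq_nonneg S,
          mul_nonneg (mul_nonneg (sq_nonneg S) hc.le) hfac]
      linarith
  intro z hz
  constructor
  · have := key (show (0:ℝ) ≤ z from hz)
    simp only [mul_zero, add_zero] at this
    have hF0' : F 0 = (S - r) ^ 2 / 2 := by
      rw [hFeq 0]; simp only [mul_zero, Real.exp_zero, mul_one]
      rw [← hF0, div_mul_eq_div_div]; ring
    rw [hF0'] at this
    linarith
  · rw [hFeq z]
    have hE : 1 ≤ Real.exp (c * z) := Real.one_le_exp (by positivity)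
    have h1 : 1 + a ≤ 1 + a * Real.exp (c * z) := by nlinarith
    have h1a0 : (0:ℝ) < 1 + a := by positivity
    have hsq : (1 + a) ^ 2 ≤ (1 + a * Real.exp (c * z)) ^ 2 := by nlinarith
    calc S ^ 2 / 2 * ((1 + a * Real.exp (c * z)) ^ 2)⁻¹
        ≤ S ^ 2 / 2 * ((1 + a) ^ 2)⁻¹ := by
          apply mul_le_mul_of_nonneg_left _ (by positivity)
          exact inv_anti₀ (by positivity) hsq
      _ = (S - r) ^ 2 / 2 := by rw [← hF0, div_mul_eq_div_div]; ring
end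

section
/- Let α > 0, n_s ≥ N ≥ 1, and P_s(k) = A k^{−(α+1)} with A⁻¹ = ∑_{k=1}^{n_s} k^{−(α+1)}. Then ∑_{k=N+1}^{n_s} P_s(k) = (N^{−α} − n_s^{−α})/(α ζ(α+1)) + O(N^{−min(α+1, 2α)}), with implied constant depending only on α. -/
open Real Filter Finset

lemma mvt_rpow (α : ℝ) (hα : 0 < α) (x : ℝ) (hx : 1 ≤ x) :
    α * (x + 1) ^ (-α - 1) ≤ x ^ (-α) - (x + 1) ^ (-α) ∧
      x ^ (-α) - (x + 1) ^ (-α) ≤ α * x ^ (-α - 1) := by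
  have hx0 : (0:ℝ) < x := lt_of_lt_of_le one_pos hx
  obtain ⟨c, hc, hceq⟩ := exists_hasDerivAt_eq_slope (fun t : ℝ => t ^ (-α))
    (fun t : ℝ => (-α) * t ^ (-α - 1)) (by linarith : x < x + 1)
    (ContinuousOn.rpow_const continuousOn_id fun t ht => Or.inl (ne_of_gt (lt_of_lt_of_le hx0 ht.1)))
    (fun t ht => Real.hasDerivAt_rpow_const (Or.inl (ne_of_gt (lt_trans hx0 ht.1))))
  have hc0 : 0 < c := lt_trans hx0 hc.1
  have heq : x ^ (-α) - (x + 1) ^ (-α) = α * c ^ (-α - 1) := by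
    have h1 : x + 1 - x = 1 := by ring
    rw [h1, div_one] at hceq
    nlinarith [hceq]
  constructor
  · rw [heq]
    have : (x + 1) ^ (-α - 1) ≤ c ^ (-α - 1) :=
      Real.rpow_le_rpow_of_nonpos hc0 hc.2.le (by linarith)
    nlinarith
  · rw [heq]
    have : c ^ (-α - 1) ≤ x ^ (-α - 1) :=
      Real.rpow_le_rpow_of_nonpos hx0 hc.1.le (by linarith)
    nlinarith

lemma tel_hasSum (α : ℝ) (hα : 0 < α) (a : ℝ) (ha : 1 ≤ a) :
    HasSum (fun k : ℕ => ((a + k) ^ (-α) - (a + k + 1) ^ (-α)) / α) (a ^ (-α) / α) := by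
  have ha0 : (0:ℝ) < a := lt_of_lt_of_le one_pos ha
  have hnn : ∀ k : ℕ, 0 ≤ ((a + k) ^ (-α) - (a + k + 1) ^ (-α)) / α := by
    intro k
    have h1 : (0:ℝ) < a + k := by positivity
    have := Real.rpow_le_rpow_of_nonpos h1 (by linarith : a + k ≤ a + k + 1)
      (by linarith : -α ≤ 0)
    exact div_nonneg (by linarith) hα.le
  rw [hasSum_iff_tendsto_nat_of_nonneg hnn]
  have hre : ∀ m : ℕ, ∑ i ∈ Finset.range m, ((a + i) ^ (-α) - (a + i + 1) ^ (-α)) / α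
      = a ^ (-α) / α - (a + m) ^ (-α) / α := by
    intro m
    have : ∀ i : ℕ, ((a + i) ^ (-α) - (a + i + 1) ^ (-α)) / α
        = (fun j : ℕ => (a + j) ^ (-α) / α) i - (fun j : ℕ => (a + j) ^ (-α) / α) (i + 1) := by
      intro i
      simp only []
      push_cast
      ring_nf
    rw [Finset.sum_congr rfl fun i _ => this i, Finset.sum_range_sub']
    simp
  simp only [hre]
  have hlim : Filter.Tendsto (fun m : ℕ => (a + m) ^ (-α) / α) Filter.atTop (nhds 0) := by
    have h1 : Filter.Tendsto (fun m : ℕ => a + (m:ℝ)) Filter.atTop Filter.atTop :=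
      Filter.tendsto_atTop_add_const_left _ a tendsto_natCast_atTop_atTop
    have h2 := (tendsto_rpow_neg_atTop hα).comp h1
    simpa using h2.div_const α
  have := (tendsto_const_nhds (α := ℕ) (x := a ^ (-α) / α)).sub hlim
  simpa using this

lemma f_summable (α : ℝ) (hα : 0 < α) :
    Summable (fun k : ℕ => ((k:ℝ) + 1) ^ (-α - 1)) := by
  have h : Summable (fun k : ℕ => (k:ℝ) ^ (-α - 1)) :=
    Real.summable_nat_rpow.2 (by linarith)
  have := (summable_nat_add_iff 1).2 h
  simpa [Nat.cast_add] using this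

lemma tail_bounds (α : ℝ) (hα : 0 < α) (n : ℕ) (hn : 1 ≤ n) :
    ((n:ℝ) + 1) ^ (-α) / α ≤ (∑' k : ℕ, (((k + n : ℕ):ℝ) + 1) ^ (-α - 1)) ∧
      (∑' k : ℕ, (((k + n : ℕ):ℝ) + 1) ^ (-α - 1)) ≤ (n:ℝ) ^ (-α) / α := by
  have hn1 : (1:ℝ) ≤ (n:ℝ) := by exact_mod_cast hn
  have hsum : Summable (fun k : ℕ => (((k + n : ℕ):ℝ) + 1) ^ (-α - 1)) :=
    (summable_nat_add_iff n).2 (f_summable α hα)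
  constructor
  · rw [← (tel_hasSum α hα ((n:ℝ) + 1) (by linarith)).tsum_eq]
    refine Summable.tsum_le_tsum (fun k => ?_) (tel_hasSum α hα ((n:ℝ) + 1) (by linarith)).summable hsum
    have hm := (mvt_rpow α hα ((n:ℝ) + 1 + k) (by have hk : (0:ℝ) ≤ k := Nat.cast_nonneg k; linarith)).2
    rw [div_le_iff₀ hα]
    have hc : (((k + n : ℕ):ℝ) + 1) = (n:ℝ) + 1 + k := by push_cast; ring
    rw [hc]
    calc ((n:ℝ) + 1 + k) ^ (-α) - ((n:ℝ) + 1 + k + 1) ^ (-α)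
        ≤ α * ((n:ℝ) + 1 + k) ^ (-α - 1) := hm
      _ = ((n:ℝ) + 1 + k) ^ (-α - 1) * α := by ring
  · rw [← (tel_hasSum α hα (n:ℝ) hn1).tsum_eq]
    refine Summable.tsum_le_tsum (fun k => ?_) hsum (tel_hasSum α hα (n:ℝ) hn1).summable
    have hm := (mvt_rpow α hα ((n:ℝ) + k) (by have hk : (0:ℝ) ≤ k := Nat.cast_nonneg k; linarith)).1
    rw [le_div_iff₀ hα]
    have hc : (((k + n : ℕ):ℝ) + 1) = (n:ℝ) + k + 1 := by push_cast; ring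
    rw [hc]
    calc ((n:ℝ) + k + 1) ^ (-α - 1) * α = α * ((n:ℝ) + k + 1) ^ (-α - 1) := by ring
      _ ≤ ((n:ℝ) + k) ^ (-α) - ((n:ℝ) + k + 1) ^ (-α) := hm

lemma tail_dev (α : ℝ) (hα : 0 < α) (n : ℕ) (hn : 1 ≤ n) :
    |(∑' k : ℕ, (((k + n : ℕ):ℝ) + 1) ^ (-α - 1)) - (n:ℝ) ^ (-α) / α| ≤ (n:ℝ) ^ (-α - 1) := by
  obtain ⟨hl, hu⟩ := tail_bounds α hα n hn
  have hn1 : (1:ℝ) ≤ (n:ℝ) := by exact_mod_cast hn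
  have hn0 : (0:ℝ) < (n:ℝ) := by linarith
  have hm := (mvt_rpow α hα (n:ℝ) hn1).2
  have h3 : ((n:ℝ) ^ (-α) - ((n:ℝ) + 1) ^ (-α)) / α ≤ (n:ℝ) ^ (-α - 1) := by
    rw [div_le_iff₀ hα]; nlinarith [hm]
  have h4 : (n:ℝ) ^ (-α) / α - ((n:ℝ) + 1) ^ (-α) / α
      = ((n:ℝ) ^ (-α) - ((n:ℝ) + 1) ^ (-α)) / α := by ring
  have h5 : (0:ℝ) ≤ (n:ℝ) ^ (-α - 1) := Real.rpow_nonneg hn0.le _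
  rw [abs_le]
  constructor <;> linarith

set_option maxHeartbeats 1000000 in
theorem stmt_11 (α : ℝ) (hα : 0 < α) :
    ∃ C : ℝ, ∀ N ns : ℕ, 1 ≤ N → N ≤ ns →
      ∀ A : ℝ, A = (∑ k ∈ Finset.Icc 1 ns, (k : ℝ) ^ (-(α + 1)))⁻¹ →
      |(∑ k ∈ Finset.Icc (N + 1) ns, A * (k : ℝ) ^ (-(α + 1))) -
        ((N : ℝ) ^ (-α) - (ns : ℝ) ^ (-α)) / (α * ∑' k : ℕ, ((k : ℝ) + 1) ^ (-(α + 1)))| ≤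
        C * (N : ℝ) ^ (-min (α + 1) (2 * α)) := by
  refine ⟨1 / α ^ 2 + 2, fun N ns hN hNns A hA => ?_⟩
  have hexp : -(α + 1) = -α - 1 := by ring
  simp only [hexp]
  set F : ℕ → ℝ := fun k => ((k:ℝ) + 1) ^ (-α - 1) with hF
  have hFsum : Summable F := f_summable α hα
  have hFnn : ∀ k, 0 ≤ F k := fun k => Real.rpow_nonneg (by positivity) _
  set ζ : ℝ := ∑' k : ℕ, ((k:ℝ) + 1) ^ (-α - 1) with hζ
  set T : ℕ → ℝ := fun n => ∑' k : ℕ, (((k + n : ℕ):ℝ) + 1) ^ (-α - 1) with hT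
  -- partial sums
  have hS : ∀ n : ℕ, ∑ k ∈ Finset.Icc 1 n, (k:ℝ) ^ (-α - 1) = ∑ i ∈ Finset.range n, F i := by
    intro n
    rw [show Finset.Icc 1 n = Finset.Ico 1 (n + 1) by rw [Finset.Ico_add_one_right_eq_Icc],
      Finset.sum_Ico_eq_sum_range]
    refine Finset.sum_congr (by simp) fun i _ => ?_
    simp only [hF]
    push_cast
    ring_nf
  have hTdef : ∀ n : ℕ, ∑ i ∈ Finset.range n, F i + T n = ζ := by
    intro n
    exact Summable.sum_add_tsum_nat_add n hFsum
  -- basic facts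
  have hN1 : (1:ℝ) ≤ (N:ℝ) := by exact_mod_cast hN
  have hN0 : (0:ℝ) < (N:ℝ) := by linarith
  have hns1 : 1 ≤ ns := le_trans hN hNns
  have hnsR : (1:ℝ) ≤ (ns:ℝ) := by exact_mod_cast hns1
  have hNnsR : (N:ℝ) ≤ (ns:ℝ) := by exact_mod_cast hNns
  have hζ1 : 1 ≤ ζ := by
    have := Summable.le_tsum hFsum 0 fun i _ => hFnn i
    simpa [hF] using this
  have hS1 : (1:ℝ) ≤ ∑ i ∈ Finset.range ns, F i := by
    have h0 : (0:ℕ) ∈ Finset.range ns := Finset.mem_range.2 hns1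
    have := Finset.single_le_sum (fun i _ => hFnn i) h0
    simpa [hF] using this
  set Sns : ℝ := ∑ i ∈ Finset.range ns, F i with hSns
  have hTnn : ∀ n, 0 ≤ T n := fun n => tsum_nonneg fun k => Real.rpow_nonneg (by positivity) _
  -- the sum over Icc (N+1) ns
  have hsplit : ∑ k ∈ Finset.Icc (N + 1) ns, (k:ℝ) ^ (-α - 1) = T N - T ns := by
    have h1 : ∑ k ∈ Finset.Ioc 0 N, (k:ℝ) ^ (-α - 1)
        + ∑ k ∈ Finset.Ioc N ns, (k:ℝ) ^ (-α - 1)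
        = ∑ k ∈ Finset.Ioc 0 ns, (k:ℝ) ^ (-α - 1) :=
      Finset.sum_Ioc_consecutive _ (Nat.zero_le N) hNns
    have e1 : Finset.Icc (N + 1) ns = Finset.Ioc N ns := Finset.Icc_add_one_left_eq_Ioc N ns
    have e2 : Finset.Ioc 0 N = Finset.Icc 1 N := (Finset.Icc_add_one_left_eq_Ioc 0 N).symm
    have e3 : Finset.Ioc 0 ns = Finset.Icc 1 ns := (Finset.Icc_add_one_left_eq_Ioc 0 ns).symm
    rw [e1]
    rw [e2, e3, hS, hS] at h1
    have hTN := hTdef N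
    have hTns := hTdef ns
    linarith
  have hA' : A = Sns⁻¹ := by
    rw [hA]
    congr 1
    simpa only [hexp] using hS ns
  -- bounds
  have hTNb := tail_dev α hα N hN
  have hTnsb := tail_dev α hα ns hns1
  have hTNu : T N ≤ (N:ℝ) ^ (-α) / α := (tail_bounds α hα N hN).2
  have hTnsu : T ns ≤ (ns:ℝ) ^ (-α) / α := (tail_bounds α hα ns hns1).2
  have hSnsζ : Sns + T ns = ζ := hTdef ns
  have hSpos : (0:ℝ) < Sns := lt_of_lt_of_le one_pos hS1
  have hζpos : (0:ℝ) < ζ := lt_of_lt_of_le one_pos hζ1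
  set D : ℝ := T N - T ns with hD
  have hDnn : 0 ≤ D := by
    have hsub : Finset.range N ⊆ Finset.range ns := Finset.range_subset_range.2 hNns
    have := Finset.sum_le_sum_of_subset_of_nonneg hsub fun i _ _ => hFnn i
    have hTN := hTdef N
    have hTns := hTdef ns
    simp only [hD]
    linarith
  -- rewrite goal sum
  rw [← Finset.mul_sum, hsplit, hA']
  -- triangle inequality
  have key : |Sns⁻¹ * D - ((N:ℝ) ^ (-α) - (ns:ℝ) ^ (-α)) / (α * ζ)|
      ≤ |Sns⁻¹ * D - D / ζ| + |D / ζ - ((N:ℝ) ^ (-α) - (ns:ℝ) ^ (-α)) / (α * ζ)| :=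
    abs_sub_le _ _ _
  -- first term
  have h1eq : Sns⁻¹ * D - D / ζ = D * T ns / (Sns * ζ) := by
    field_simp
    nlinarith [hSnsζ]
  have hb1 : |Sns⁻¹ * D - D / ζ| ≤ (N:ℝ) ^ (-(2 * α)) / α ^ 2 := by
    rw [h1eq, abs_of_nonneg (div_nonneg (mul_nonneg hDnn (hTnn ns)) (mul_pos hSpos hζpos).le)]
    have hd : D * T ns / (Sns * ζ) ≤ D * T ns := by
      apply div_le_self (mul_nonneg hDnn (hTnn ns))
      nlinarith
    have hDu : D ≤ (N:ℝ) ^ (-α) / α := by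
      have := hTnn ns; linarith
    have hnsN : (ns:ℝ) ^ (-α) ≤ (N:ℝ) ^ (-α) :=
      Real.rpow_le_rpow_of_nonpos hN0 hNnsR (by linarith)
    have hTnsN : T ns ≤ (N:ℝ) ^ (-α) / α := by
      calc T ns ≤ (ns:ℝ) ^ (-α) / α := hTnsu
        _ ≤ (N:ℝ) ^ (-α) / α := by gcongr
    have hmul : (N:ℝ) ^ (-α) * (N:ℝ) ^ (-α) = (N:ℝ) ^ (-(2 * α)) := by
      rw [← Real.rpow_add hN0]; ring_nf
    calc D * T ns / (Sns * ζ) ≤ D * T ns := hd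
      _ ≤ ((N:ℝ) ^ (-α) / α) * ((N:ℝ) ^ (-α) / α) := by
          apply mul_le_mul hDu hTnsN (hTnn ns) (by positivity)
      _ = (N:ℝ) ^ (-(2 * α)) / α ^ 2 := by
          rw [div_mul_div_comm, hmul]; ring
  -- second term
  have h2eq : D / ζ - ((N:ℝ) ^ (-α) - (ns:ℝ) ^ (-α)) / (α * ζ)
      = (D - ((N:ℝ) ^ (-α) - (ns:ℝ) ^ (-α)) / α) / ζ := by
    field_simp
  have hb2 : |D / ζ - ((N:ℝ) ^ (-α) - (ns:ℝ) ^ (-α)) / (α * ζ)| ≤ 2 * (N:ℝ) ^ (-α - 1) := by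
    rw [h2eq, abs_div, abs_of_pos hζpos]
    have step1 : |D - ((N:ℝ) ^ (-α) - (ns:ℝ) ^ (-α)) / α| / ζ
        ≤ |D - ((N:ℝ) ^ (-α) - (ns:ℝ) ^ (-α)) / α| :=
      div_le_self (abs_nonneg _) hζ1
    have hsplit2 : D - ((N:ℝ) ^ (-α) - (ns:ℝ) ^ (-α)) / α
        = (T N - (N:ℝ) ^ (-α) / α) - (T ns - (ns:ℝ) ^ (-α) / α) := by
      simp only [hD]; ring
    have step2 : |D - ((N:ℝ) ^ (-α) - (ns:ℝ) ^ (-α)) / α|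
        ≤ (N:ℝ) ^ (-α - 1) + (ns:ℝ) ^ (-α - 1) := by
      rw [hsplit2]
      calc |(T N - (N:ℝ) ^ (-α) / α) - (T ns - (ns:ℝ) ^ (-α) / α)|
          ≤ |T N - (N:ℝ) ^ (-α) / α| + |T ns - (ns:ℝ) ^ (-α) / α| := abs_sub _ _
        _ ≤ (N:ℝ) ^ (-α - 1) + (ns:ℝ) ^ (-α - 1) := add_le_add hTNb hTnsb
    have hnsN' : (ns:ℝ) ^ (-α - 1) ≤ (N:ℝ) ^ (-α - 1) :=
      Real.rpow_le_rpow_of_nonpos hN0 hNnsR (by linarith)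
    linarith
  -- combine
  set M : ℝ := (N:ℝ) ^ (-min (α + 1) (2 * α)) with hM
  have hm1 : (N:ℝ) ^ (-(2 * α)) ≤ M :=
    Real.rpow_le_rpow_of_exponent_le hN1
      (by have := min_le_right (α + 1) (2 * α); linarith)
  have hm2 : (N:ℝ) ^ (-α - 1) ≤ M :=
    Real.rpow_le_rpow_of_exponent_le hN1
      (by have := min_le_left (α + 1) (2 * α); linarith)
  have hdiv : (N:ℝ) ^ (-(2 * α)) / α ^ 2 ≤ M / α ^ 2 := by gcongr
  have hfin : (1 / α ^ 2 + 2) * M = M / α ^ 2 + 2 * M := by ring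
  calc |Sns⁻¹ * D - ((N:ℝ) ^ (-α) - (ns:ℝ) ^ (-α)) / (α * ζ)|
      ≤ |Sns⁻¹ * D - D / ζ| + |D / ζ - ((N:ℝ) ^ (-α) - (ns:ℝ) ^ (-α)) / (α * ζ)| := key
    _ ≤ (N:ℝ) ^ (-(2 * α)) / α ^ 2 + 2 * (N:ℝ) ^ (-α - 1) := add_le_add hb1 hb2
    _ ≤ (1 / α ^ 2 + 2) * M := by rw [hfin]; linarith
end

section
/- Let α > 0, S > 0, 0 < r < S, and let Φ(u) = S²/(2(1 + (S/r − 1)⁻¹·e^{2u})²). Then the integral ∫_Λ^∞ u^{−1/(α+1)} Φ(u) du converges for every Λ ≥ 0, and lim_{r→0⁺} (log((S−r)/r))^{−α/(α+1)} · ∫_Λ^∞ u^{−1/(α+1)} Φ(u) du = (2^{1/(α+1)} S² (α+1))/(4α) for any fixed Λ > 0. -/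
open MeasureTheory

open Set Filter in
theorem stmt_17 (α S : ℝ) (hα : 0 < α) (hS : 0 < S)
    (Φ : ℝ → ℝ → ℝ)
    (hΦ : Φ = fun r u => S ^ 2 / (2 * (1 + (S / r - 1)⁻¹ * Real.exp (2 * u)) ^ 2)) :
    (∀ r : ℝ, 0 < r → r < S → ∀ Λ : ℝ, 0 ≤ Λ →
      IntegrableOn (fun u => u ^ (-(1 : ℝ) / (α + 1)) * Φ r u) (Set.Ioi Λ)) ∧
    (∀ Λ : ℝ, 0 < Λ →
      Filter.Tendsto
        (fun r => (Real.log ((S - r) / r)) ^ (-α / (α + 1)) *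
          ∫ u in Set.Ioi Λ, u ^ (-(1 : ℝ) / (α + 1)) * Φ r u)
        (nhdsWithin 0 (Set.Ioi 0))
        (nhds (2 ^ ((1 : ℝ) / (α + 1)) * S ^ 2 * (α + 1) / (4 * α)))) := by
  have hα1 : (0:ℝ) < α + 1 := by linarith
  set s : ℝ := -(1:ℝ)/(α+1) with hs_def
  have hs : -1 < s := by
    rw [hs_def, neg_div, neg_lt, neg_neg, div_lt_one hα1]; linarith
  have hs10 : 0 < s + 1 := by linarith
  have hBint : IntegrableOn (fun v : ℝ => v ^ s * Real.exp (-4*v)) (Ioi 0) := by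
    have h := integrableOn_rpow_mul_exp_neg_mul_rpow hs (by norm_num : (0:ℝ) < 1)
      (by norm_num : (0:ℝ) < 4)
    refine h.congr_fun (fun x hx => ?_) measurableSet_Ioi
    simp only [Real.rpow_one]
  constructor
  · -- integrability
    intro r hr0 hrS Λ hΛ
    have hM : 0 < S / r - 1 := by
      rw [sub_pos, lt_div_iff₀ hr0, one_mul]; exact hrS
    have hmeas : AEStronglyMeasurable (fun u => u ^ s * Φ r u)
        (volume.restrict (Ioi Λ)) := by
      refine ContinuousOn.aestronglyMeasurable ?_ measurableSet_Ioi
      intro u hu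
      have hu0 : 0 < u := lt_of_le_of_lt hΛ hu
      apply ContinuousWithinAt.mul
      · exact (Real.continuousAt_rpow_const u s (Or.inl (ne_of_gt hu0))).continuousWithinAt
      · rw [hΦ]
        simp only
        apply ContinuousAt.continuousWithinAt
        apply ContinuousAt.div continuousAt_const
        · fun_prop
        · exact ne_of_gt (by nlinarith [mul_pos (inv_pos.mpr hM) (Real.exp_pos (2*u))])
    refine Integrable.mono'
      (g := fun u => (S^2*(S/r-1)^2/2) * (u ^ s * Real.exp (-4*u))) ?_ hmeas ?_
    · exact IntegrableOn.mono_set (hBint.const_mul _) (Set.Ioi_subset_Ioi hΛ)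
    · rw [ae_restrict_iff' measurableSet_Ioi]
      filter_upwards with u hu
      have hu0 : 0 < u := lt_of_le_of_lt hΛ hu
      have hx : 0 < (S/r-1)⁻¹ * Real.exp (2*u) := by positivity
      rw [hΦ]
      simp only
      rw [Real.norm_eq_abs, abs_of_nonneg (by positivity)]
      have he : Real.exp (2*u) ^ 2 = Real.exp (4*u) := by
        rw [sq, ← Real.exp_add]; ring_nf
      have key : S^2 / (2*(1+(S/r-1)⁻¹*Real.exp (2*u))^2)
          ≤ S^2*(S/r-1)^2/2 * Real.exp (-4*u) := by
        have h2 : S^2 / (2*(1+(S/r-1)⁻¹*Real.exp (2*u))^2)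
            ≤ S^2 / (2*((S/r-1)⁻¹*Real.exp (2*u))^2) :=
          div_le_div_of_nonneg_left (by positivity) (by positivity) (by nlinarith)
        have h3 : S^2 / (2*((S/r-1)⁻¹*Real.exp (2*u))^2)
            = S^2*(S/r-1)^2/2 * Real.exp (-4*u) := by
          rw [show (-4:ℝ)*u = -(4*u) by ring, Real.exp_neg, mul_pow, he,
            div_eq_mul_inv, mul_inv, mul_inv, inv_pow, inv_inv]
          ring
        exact h3 ▸ h2
      calc u ^ s * (S^2 / (2*(1+(S/r-1)⁻¹*Real.exp (2*u))^2))
          ≤ u ^ s * (S^2*(S/r-1)^2/2 * Real.exp (-4*u)) :=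
            mul_le_mul_of_nonneg_left key (Real.rpow_nonneg hu0.le s)
        _ = S^2*(S/r-1)^2/2 * (u ^ s * Real.exp (-4*u)) := by ring
  · -- the limit
    intro Λ hΛ
    set L : ℝ → ℝ := fun r => Real.log ((S - r)/r) with hL_def
    have hLtop : Tendsto L (nhdsWithin 0 (Ioi 0)) atTop := by
      apply Real.tendsto_log_atTop.comp
      have h1 : Tendsto (fun r : ℝ => S * r⁻¹ + (-1)) (nhdsWithin 0 (Ioi 0)) atTop :=
        tendsto_atTop_add_const_right _ _ (tendsto_inv_nhdsGT_zero.const_mul_atTop hS)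
      refine h1.congr' ?_
      filter_upwards [eventually_mem_nhdsWithin] with r (hr : 0 < r)
      rw [sub_div, div_self (ne_of_gt hr), div_eq_mul_inv]
      ring
    have hE : ∀ᶠ r in nhdsWithin 0 (Ioi 0), 0 < r ∧ r < S ∧ 1 ≤ L r := by
      have e1 : ∀ᶠ r in nhdsWithin 0 (Ioi 0), (0:ℝ) < r := eventually_mem_nhdsWithin
      have e2 : ∀ᶠ r in nhdsWithin 0 (Ioi 0), r < S :=
        ((eventually_lt_nhds hS).filter_mono nhdsWithin_le_nhds)
      have e3 := hLtop.eventually_ge_atTop 1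
      filter_upwards [e1, e2, e3] with r h1 h2 h3 using ⟨h1, h2, h3⟩
    -- key identity
    have key : ∀ r : ℝ, 0 < r → r < S → 1 ≤ L r →
        (∫ v in Ioi (0:ℝ), (Ioi (Λ / L r)).indicator
          (fun v => v ^ s * (S^2 / (2*(1 + Real.exp (L r * (2*v - 1)))^2))) v)
        = (L r) ^ (-α/(α+1)) * ∫ u in Ioi Λ, u ^ s * Φ r u := by
      intro r hr0 hrS hL1
      have hL0 : 0 < L r := lt_of_lt_of_le one_pos hL1
      have hMr : 0 < (S - r)/r := div_pos (by linarith) hr0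
      have hL_eq : Real.exp (L r) = (S - r)/r := Real.exp_log hMr
      have hexp : (S / r - 1)⁻¹ = Real.exp (-(L r)) := by
        rw [Real.exp_neg, hL_eq]
        congr 1
        field_simp
      have hcomp := MeasureTheory.integral_comp_mul_left_Ioi
        (fun u => u ^ s * Φ r u) (Λ / L r) hL0
      rw [show L r * (Λ / L r) = Λ by rw [mul_comm, div_mul_cancel₀ _ (ne_of_gt hL0)]] at hcomp
      have hY : (∫ u in Ioi Λ, u ^ s * Φ r u)
          = L r * ∫ v in Ioi (Λ / L r), (L r * v) ^ s * Φ r (L r * v) := by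
        rw [hcomp, smul_eq_mul]
        field_simp
      have hcong : (∫ v in Ioi (Λ / L r), (L r * v) ^ s * Φ r (L r * v))
          = ∫ v in Ioi (Λ / L r), (L r) ^ s *
              (v ^ s * (S^2 / (2*(1 + Real.exp (L r * (2*v - 1)))^2))) := by
        refine setIntegral_congr_fun measurableSet_Ioi (fun v hv => ?_)
        have hv0 : 0 < v := lt_trans (div_pos hΛ hL0) hv
        have hee : Real.exp (-(L r)) * Real.exp (2*(L r * v))
            = Real.exp (L r * (2*v - 1)) := by
          rw [← Real.exp_add]; congr 1; ring
        rw [hΦ]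
        simp only
        rw [Real.mul_rpow hL0.le hv0.le, hexp, hee, mul_assoc]
      have hind : (∫ v in Ioi (0:ℝ), (Ioi (Λ / L r)).indicator
            (fun v => v ^ s * (S^2 / (2*(1 + Real.exp (L r * (2*v - 1)))^2))) v)
          = ∫ v in Ioi (Λ / L r),
              v ^ s * (S^2 / (2*(1 + Real.exp (L r * (2*v - 1)))^2)) := by
        rw [setIntegral_indicator measurableSet_Ioi]
        congr 1
        rw [Set.Ioi_inter_Ioi, max_eq_right (le_of_lt (div_pos hΛ hL0))]
      rw [hind, hY, hcong, MeasureTheory.integral_const_mul]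
      rw [show (L r) ^ (-α/(α+1)) * (L r * ((L r) ^ s * _)) =
        ((L r) ^ (-α/(α+1)) * (L r) ^ (1:ℝ) * (L r) ^ s) *
          (∫ v in Ioi (Λ / L r),
            v ^ s * (S^2 / (2*(1 + Real.exp (L r * (2*v - 1)))^2)))
        from by rw [Real.rpow_one]; ring]
      rw [← Real.rpow_add hL0, ← Real.rpow_add hL0]
      rw [show -α/(α+1) + 1 + s = 0 by rw [hs_def]; field_simp; ring]
      rw [Real.rpow_zero, one_mul]
    have hDCT : Filter.Tendsto (fun r => ∫ v in Ioi (0:ℝ), (Ioi (Λ / L r)).indicator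
        (fun v => v ^ s * (S^2 / (2*(1 + Real.exp (L r * (2*v - 1)))^2))) v)
        (nhdsWithin 0 (Ioi 0))
        (nhds (∫ v in Ioi (0:ℝ),
          (Ioo (0:ℝ) (1/2)).indicator (fun v => v ^ s * (S^2/2)) v)) := by
      refine tendsto_integral_filter_of_dominated_convergence
        (bound := fun v => (S^2/2*Real.exp 2) * (v ^ s * Real.exp (-4*v)))
        ?_ ?_ ?_ ?_
      · filter_upwards with r
        refine AEStronglyMeasurable.indicator ?_ measurableSet_Ioi
        refine ContinuousOn.aestronglyMeasurable ?_ measurableSet_Ioi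
        intro v hv
        apply ContinuousWithinAt.mul
        · exact (Real.continuousAt_rpow_const v s (Or.inl (ne_of_gt hv))).continuousWithinAt
        · apply ContinuousAt.continuousWithinAt
          apply ContinuousAt.div continuousAt_const
          · fun_prop
          · exact ne_of_gt (by nlinarith [Real.exp_pos (L r * (2*v-1))])
      · filter_upwards [hE] with r hr
        obtain ⟨hr0, hrS, hL1⟩ := hr
        rw [ae_restrict_iff' measurableSet_Ioi]
        filter_upwards with v hv
        have hv0 : (0:ℝ) < v := hv
        by_cases hvc : v ∈ Ioi (Λ / L r)
        · rw [Set.indicator_of_mem hvc]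
          have hEx : 0 < Real.exp (L r * (2*v-1)) := Real.exp_pos _
          rw [Real.norm_eq_abs, abs_of_nonneg (by positivity)]
          have hcore : S^2 / (2*(1 + Real.exp (L r * (2*v-1)))^2)
              ≤ S^2/2 * Real.exp (2 - 4*v) := by
            rcases le_or_gt v (1/2) with hv2 | hv2
            · have h1 : S^2 / (2*(1 + Real.exp (L r * (2*v-1)))^2) ≤ S^2/2 := by
                have h0 := div_le_div_of_nonneg_left (by positivity : (0:ℝ) ≤ S^2)
                  (by norm_num : (0:ℝ) < 2)
                  (by nlinarith : (2:ℝ) ≤ 2*(1 + Real.exp (L r * (2*v-1)))^2)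
                exact h0
              have h2 : (1:ℝ) ≤ Real.exp (2 - 4*v) :=
                Real.one_le_exp (by linarith)
              calc S^2 / (2*(1 + Real.exp (L r * (2*v-1)))^2) ≤ S^2/2 := h1
                _ = S^2/2 * 1 := by ring
                _ ≤ S^2/2 * Real.exp (2 - 4*v) :=
                    mul_le_mul_of_nonneg_left h2 (by positivity)
            · have hsq : Real.exp (L r * (2*v-1))^2 = Real.exp (2*(L r * (2*v-1))) := by
                rw [sq, ← Real.exp_add]; ring_nf
              have h1 : S^2 / (2*(1 + Real.exp (L r * (2*v-1)))^2)
                  ≤ S^2 / (2*Real.exp (2*(L r * (2*v-1)))) := by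
                rw [← hsq]
                exact div_le_div_of_nonneg_left (by positivity) (by positivity)
                  (by nlinarith)
              have h2 : S^2 / (2*Real.exp (2*(L r * (2*v-1))))
                  ≤ S^2 / (2*Real.exp (2*(2*v-1))) := by
                apply div_le_div_of_nonneg_left (by positivity) (by positivity)
                have hle : (2:ℝ)*(2*v-1) ≤ 2*(L r*(2*v-1)) := by nlinarith
                have := Real.exp_le_exp.mpr hle
                linarith
              have h3 : S^2 / (2*Real.exp (2*(2*v-1))) = S^2/2 * Real.exp (2-4*v) := by
                rw [show (2:ℝ)-4*v = -(2*(2*v-1)) by ring, Real.exp_neg]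
                field_simp
              linarith
          calc v ^ s * (S^2 / (2*(1 + Real.exp (L r * (2*v-1)))^2))
              ≤ v ^ s * (S^2/2 * Real.exp (2 - 4*v)) :=
                mul_le_mul_of_nonneg_left hcore (Real.rpow_nonneg hv0.le s)
            _ = S^2/2*Real.exp 2 * (v ^ s * Real.exp (-4*v)) := by
                rw [show (2:ℝ) - 4*v = 2 + (-4*v) by ring, Real.exp_add]; ring
        · rw [Set.indicator_of_notMem hvc, norm_zero]
          positivity
      · exact hBint.const_mul _
      · have h12 : ∀ᵐ v : ℝ ∂(volume.restrict (Ioi 0)), v ≠ (1/2:ℝ) := by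
          refine ae_mono Measure.restrict_le_self ?_
          change ∀ᵐ v : ℝ ∂volume, v ≠ 1/2
          rw [ae_iff]
          simp only [ne_eq, not_not]
          rw [show {v : ℝ | v = 1/2} = {(1/2 : ℝ)} from Set.setOf_eq_eq_singleton]
          exact Real.volume_singleton
        filter_upwards [h12, ae_restrict_mem measurableSet_Ioi] with v hv12 hv0
        have hv0' : (0:ℝ) < v := hv0
        have hΛL : Filter.Tendsto (fun r => Λ / L r) (nhdsWithin 0 (Ioi 0)) (nhds 0) := by
          have h1 : Filter.Tendsto (fun r => Λ * (L r)⁻¹) (nhdsWithin 0 (Ioi 0))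
              (nhds (Λ * 0)) := tendsto_const_nhds.mul hLtop.inv_tendsto_atTop
          rw [mul_zero] at h1
          refine h1.congr (fun r => ?_)
          rw [div_eq_mul_inv]
        have hmem : ∀ᶠ r in nhdsWithin 0 (Ioi 0), v ∈ Ioi (Λ / L r) := by
          filter_upwards [hΛL.eventually (eventually_lt_nhds hv0')] with r hr
          exact hr
        have heq : (fun r => v ^ s * (S^2 / (2*(1 + Real.exp (L r * (2*v - 1)))^2)))
            =ᶠ[nhdsWithin 0 (Ioi 0)] (fun r => (Ioi (Λ / L r)).indicator
              (fun v => v ^ s * (S^2 / (2*(1 + Real.exp (L r * (2*v - 1)))^2))) v) := by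
          filter_upwards [hmem] with r hr
          rw [Set.indicator_of_mem hr]
        rcases lt_or_gt_of_ne hv12 with hv | hv
        · have hmemIoo : v ∈ Ioo (0:ℝ) (1/2) := Set.mem_Ioo.mpr ⟨hv0', hv⟩
          rw [Set.indicator_of_mem hmemIoo]
          refine Filter.Tendsto.congr' heq ?_
          have hexp0 : Filter.Tendsto (fun r => Real.exp (L r * (2*v-1)))
              (nhdsWithin 0 (Ioi 0)) (nhds 0) :=
            Real.tendsto_exp_atBot.comp
              (hLtop.atTop_mul_const_of_neg (by linarith : 2*v-1 < 0))
          have hc : ContinuousAt (fun x : ℝ => v ^ s * (S^2/(2*(1+x)^2))) 0 := by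
            apply ContinuousAt.mul continuousAt_const
            apply ContinuousAt.div continuousAt_const (by fun_prop)
            norm_num
          have h4 := hc.tendsto.comp hexp0
          have h0 : (fun x : ℝ => v ^ s * (S^2/(2*(1+x)^2))) 0 = v ^ s * (S^2/2) := by
            norm_num
          norm_num at h4
          exact h4.congr (fun r => rfl)
        · have hnot : v ∉ Ioo (0:ℝ) (1/2) := by
            rw [Set.mem_Ioo]; push_neg; intro _; linarith
          rw [Set.indicator_of_notMem hnot]
          refine Filter.Tendsto.congr' heq ?_
          have hexpT : Filter.Tendsto (fun r => Real.exp (L r * (2*v-1)))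
              (nhdsWithin 0 (Ioi 0)) atTop :=
            Real.tendsto_exp_atTop.comp (hLtop.atTop_mul_const (by linarith : 0 < 2*v-1))
          have hden : Filter.Tendsto (fun x : ℝ => 2*(1+x)^2) atTop atTop := by
            have h1 : Filter.Tendsto (fun x : ℝ => 1 + x) atTop atTop :=
              tendsto_atTop_add_const_left _ 1 tendsto_id
            exact ((tendsto_pow_atTop (by norm_num : (2:ℕ) ≠ 0)).comp h1).const_mul_atTop
              (by norm_num : (0:ℝ) < 2)
          have h2 : Filter.Tendsto (fun x : ℝ => S^2/(2*(1+x)^2)) atTop (nhds 0) :=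
            Filter.Tendsto.div_atTop tendsto_const_nhds hden
          have h3 := (h2.comp hexpT).const_mul (v ^ s)
          rw [mul_zero] at h3
          exact h3.congr (fun r => rfl)
    have hval : (∫ v in Ioi (0:ℝ),
        (Ioo (0:ℝ) (1/2)).indicator (fun v => v ^ s * (S^2/2)) v)
        = 2 ^ ((1:ℝ)/(α+1)) * S^2 * (α+1)/(4*α) := by
      rw [setIntegral_indicator measurableSet_Ioo,
        show Ioi (0:ℝ) ∩ Ioo 0 (1/2) = Ioo 0 (1/2) from
          Set.inter_eq_self_of_subset_right Set.Ioo_subset_Ioi_self,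
        ← integral_Ioc_eq_integral_Ioo,
        ← intervalIntegral.integral_of_le (by norm_num : (0:ℝ) ≤ 1/2),
        intervalIntegral.integral_mul_const,
        integral_rpow (Or.inl hs),
        Real.zero_rpow (ne_of_gt hs10)]
      have hsum : s + 1 = α/(α+1) := by rw [hs_def]; field_simp; ring
      have hhalf : ((1:ℝ)/2) ^ (s+1) = (2:ℝ) ^ (-(s+1)) := by
        rw [one_div, Real.rpow_neg (by norm_num : (0:ℝ) ≤ 2),
          ← Real.inv_rpow (by norm_num : (0:ℝ) ≤ 2)]
      have hkey2 : (2:ℝ) ^ ((1:ℝ)/(α+1)) = 2 * (2:ℝ) ^ (-(s+1)) := by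
        rw [show (1:ℝ)/(α+1) = 1 + (-(s+1)) by rw [hs_def]; ring,
          Real.rpow_add (by norm_num : (0:ℝ) < 2), Real.rpow_one]
      rw [sub_zero, hhalf, hkey2, hsum]
      have hT : (0:ℝ) < (2:ℝ) ^ (-(α/(α+1))) := Real.rpow_pos_of_pos (by norm_num) _
      field_simp
      ring
    rw [← hval]
    refine Filter.Tendsto.congr' ?_ hDCT
    filter_upwards [hE] with r hr
    have h5 := key r hr.1 hr.2.1 hr.2.2
    simpa only [hL_def] using h5
end
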